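/- Let x be a permutation of a finite set Ω with |Ω| = N, let d be the order of x, and define Ind(x) = N − (number of orbits of the cyclic group ⟨x⟩ on Ω). Suppose that for every divisor k of d with k < d one has |Fix(x^k)| ≤ F_k, where Fix(x^k) is the set of points of Ω fixed by x^k. Then Ind(x) ≥ ( (d−1)·N − Σ_{k ∣ d, k < d} φ(d/k)·F_k ) / d, where φ is Euler's totient function. -/

import Mathlib

/-- Lower bound on the index of a permutation: if `x` is a permutation of a finite set
`Ω` of size `N`, of order `d`, with `Ind(x) = N − #orbits of ⟨x⟩ on Ω`, and
`|Fix(x^k)| ≤ F_k` for every proper divisor `k` of `d`, then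
`Ind(x) ≥ ((d−1)·N − Σ_{k ∣ d, k < d} φ(d/k)·F_k)/d`. -/
theorem index_lower_bound
    {Ω : Type*} [Fintype Ω]
    (x : Equiv.Perm Ω) (N d : ℕ)
    (hN : N = Fintype.card Ω) (hd : d = orderOf x)
    (Ind : ℤ)
    (hInd : Ind = (N : ℤ) -
      Nat.card (MulAction.orbitRel.Quotient (Subgroup.zpowers x) Ω))
    (Fb : ℕ → ℕ)
    (hF : ∀ k, k ∣ d → k < d → Nat.card {ω : Ω // (x ^ k) ω = ω} ≤ Fb k) :
    (((d : ℝ) - 1) * (N : ℝ) -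
        ∑ k ∈ d.divisors.filter (fun k => k < d), (Nat.totient (d / k) : ℝ) * (Fb k : ℝ)) /
        (d : ℝ) ≤ (Ind : ℝ) := by
  classical
  have hd0 : 0 < d := hd ▸ orderOf_pos x
  set c : ℕ → ℕ := fun j => Nat.card {ω : Ω // (x ^ j) ω = ω} with hc
  set Q : ℕ := Nat.card (MulAction.orbitRel.Quotient (Subgroup.zpowers x) Ω) with hQ
  haveI : ∀ a : Subgroup.zpowers x, Fintype (MulAction.fixedBy Ω a) :=
    fun a => Fintype.ofFinite _
  have hxfin : IsOfFinOrder x := isOfFinOrder_of_finite x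
  have hcard : ∀ a : Subgroup.zpowers x, ∀ j : ℕ, (a : Equiv.Perm Ω) = x ^ j →
      Fintype.card (MulAction.fixedBy Ω a) = c j := by
    intro a j ha
    rw [hc, ← Nat.card_eq_fintype_card]
    apply Nat.card_congr
    apply Equiv.subtypeEquivRight
    intro ω
    rw [MulAction.mem_fixedBy, show a • ω = (a : Equiv.Perm Ω) ω from rfl, ha]
  -- Burnside
  have hburn : ∑ j ∈ Finset.range d, c j = Q * d := by
    have h0 := MulAction.sum_card_fixedBy_eq_card_orbits_mul_card_group
      (Subgroup.zpowers x) Ω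
    have h1 : ∑ a : Subgroup.zpowers x, Fintype.card (MulAction.fixedBy Ω a)
        = ∑ j ∈ Finset.range d, c j := by
      rw [← Fin.sum_univ_eq_sum_range (fun j => c j) d, hd]
      refine Fintype.sum_equiv (finEquivZPowers hxfin).symm _ _ ?_
      intro a
      set n : Fin (orderOf x) := (finEquivZPowers hxfin).symm a with hn
      have h2 : finEquivZPowers hxfin n = a := by
        rw [hn]; exact Equiv.apply_symm_apply _ _
      have ha : (a : Equiv.Perm Ω) = x ^ (n : ℕ) := by rw [← h2]; rfl
      exact hcard a n ha
    rw [h1] at h0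
    rw [h0, hQ]
    have h3 : Fintype.card (Quotient (MulAction.orbitRel (Subgroup.zpowers x) Ω))
        = Nat.card (MulAction.orbitRel.Quotient (Subgroup.zpowers x) Ω) := by
      rw [Nat.card_eq_fintype_card]
    rw [h3]
    congr 1
    rw [hd]
    exact Fintype.card_zpowers
  -- monotonicity: Fix(x^j) ⊆ Fix(x^gcd d j)
  have himp : ∀ j : ℕ, ∀ ω : Ω, (x ^ j) ω = ω → (x ^ (Nat.gcd d j)) ω = ω := by
    intro j ω hω
    have hxd : (x : Equiv.Perm Ω) ^ d = 1 := by rw [hd]; exact pow_orderOf_eq_one x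
    have hbez := Nat.gcd_eq_gcd_ab d j
    have h4 : (x ^ (Nat.gcd d j) : Equiv.Perm Ω)
        = ((x ^ d) ^ (Nat.gcdA d j)) * ((x ^ j) ^ (Nat.gcdB d j)) := by
      rw [← zpow_natCast x (Nat.gcd d j), hbez,
        zpow_add, ← zpow_natCast x d, ← zpow_natCast x j, ← zpow_mul, ← zpow_mul]
    rw [h4, hxd, one_zpow, one_mul]
    exact Equiv.Perm.zpow_apply_eq_self_of_apply_eq_self hω _
  have hmono : ∀ j : ℕ, c j ≤ c (Nat.gcd d j) := fun j =>
    Nat.card_le_card_of_injective (Subtype.map id (fun ω h => himp j ω h))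
      (Subtype.map_injective _ Function.injective_id)
  -- sum bound
  set T : ℕ := ∑ k ∈ d.divisors.filter (fun k => k < d), Nat.totient (d / k) * Fb k with hT
  have hS : ∑ j ∈ Finset.range d, c j ≤ N + T := by
    have hsplit : ∑ j ∈ Finset.range d, c j
        = c 0 + ∑ j ∈ (Finset.range d).erase 0, c j := by
      rw [Finset.add_sum_erase _ _ (Finset.mem_range.mpr hd0)]
    rw [hsplit]
    have hc0 : c 0 = N := by
      rw [hc, hN]
      simp only [pow_zero]
      rw [Nat.card_eq_fintype_card]
      exact Fintype.card_congr (Equiv.subtypeUnivEquiv (fun ω => rfl))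
    have hrest : ∑ j ∈ (Finset.range d).erase 0, c j ≤ T := by
      calc ∑ j ∈ (Finset.range d).erase 0, c j
          ≤ ∑ j ∈ (Finset.range d).erase 0, Fb (Nat.gcd d j) := by
            apply Finset.sum_le_sum
            intro j hj
            simp only [Finset.mem_erase, Finset.mem_range] at hj
            have hgd : Nat.gcd d j ∣ d := Nat.gcd_dvd_left d j
            have hglt : Nat.gcd d j < d :=
              lt_of_le_of_lt (Nat.le_of_dvd (Nat.pos_of_ne_zero hj.1)
                (Nat.gcd_dvd_right d j)) hj.2
            exact le_trans (hmono j) (hF _ hgd hglt)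
        _ = T := by
            rw [hT, ← Finset.sum_fiberwise_of_maps_to (g := fun j => Nat.gcd d j)
              (t := d.divisors.filter (fun k => k < d))
              (fun j hj => by
                simp only [Finset.mem_erase, Finset.mem_range] at hj
                simp only [Finset.mem_filter, Nat.mem_divisors]
                exact ⟨⟨Nat.gcd_dvd_left d j, hd0.ne'⟩,
                  lt_of_le_of_lt (Nat.le_of_dvd (Nat.pos_of_ne_zero hj.1)
                    (Nat.gcd_dvd_right d j)) hj.2⟩)
              (fun j => Fb (Nat.gcd d j))]
            apply Finset.sum_congr rfl
            intro k hk
            simp only [Finset.mem_filter, Nat.mem_divisors] at hk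
            have hfib : ((Finset.range d).erase 0).filter (fun j => Nat.gcd d j = k)
                = (Finset.range d).filter (fun j => Nat.gcd d j = k) := by
              ext j
              simp only [Finset.mem_filter, Finset.mem_erase, Finset.mem_range]
              constructor
              · rintro ⟨⟨_, h⟩, hg⟩; exact ⟨h, hg⟩
              · rintro ⟨h, hg⟩
                refine ⟨⟨?_, h⟩, hg⟩
                rintro rfl
                rw [Nat.gcd_zero_right] at hg
                omega
            calc ∑ j ∈ ((Finset.range d).erase 0).filter (fun j => Nat.gcd d j = k),
                    Fb (Nat.gcd d j)
                = ∑ j ∈ ((Finset.range d).erase 0).filter (fun j => Nat.gcd d j = k),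
                    Fb k := by
                  apply Finset.sum_congr rfl
                  intro j hj
                  simp only [Finset.mem_filter] at hj
                  rw [hj.2]
              _ = (((Finset.range d).erase 0).filter (fun j => Nat.gcd d j = k)).card
                    * Fb k := by rw [Finset.sum_const, smul_eq_mul]
              _ = Nat.totient (d / k) * Fb k := by
                  rw [hfib, ← Nat.totient_div_of_dvd hk.1.1]
    omega
  -- final arithmetic
  rw [hInd]
  push_cast
  have hQd : (Q : ℝ) * d ≤ N + T := by exact_mod_cast hburn ▸ hS
  have hTcast : (T : ℝ) = ∑ k ∈ d.divisors.filter (fun k => k < d),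
      (Nat.totient (d / k) : ℝ) * (Fb k : ℝ) := by rw [hT]; push_cast; ring
  rw [div_le_iff₀ (by exact_mod_cast hd0 : (0:ℝ) < d)]
  nlinarith [hQd, hTcast]
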